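/- arXiv:1707.09041 — 5 statements merged into one kernel-verified Lean document; each statement's English description precedes it below -/
import Mathlib

section
/- (Lemma 3.2 of the paper, Euclidean form.) Let J : ℂⁿ∖{0} → (ℂⁿ →L[ℝ] ℂⁿ) be a (1,1)-tensor field of class C¹ such that for every z ≠ 0: (i) J(z)(c·z) = i·c·z for all c ∈ ℂ (J agrees with multiplication by i on 𝒵_z = ℂ·z), and (ii) J(z)(𝓗_z) ⊆ 𝓗_z, where 𝓗_z = {v ∈ ℂⁿ : ⟨z, v⟩ = 0}. Then for all real vector fields X, Y of class C¹ on ℂⁿ∖{0} and every z ≠ 0, dd^c_J τ₀(X,Y)(z) = dd^c_{J_st} τ₀(X,Y)(z), where J_st(z) is multiplication by i. -/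
noncomputable section

/-- The Euclidean space `ℂⁿ`. -/
abbrev En (n : ℕ) := EuclideanSpace ℂ (Fin n)

/-- The differential of `τ₀(z) = ‖z‖²`: `dτ₀|_z(v) = 2·Re⟨z, v⟩`. -/
def dTau {n : ℕ} (z v : En n) : ℝ := 2 * (inner ℂ z v : ℂ).re

/-- Lie bracket of two `C¹` real vector fields: `[X,Y](z) = DY(z)[X(z)] − DX(z)[Y(z)]`. -/
def lieBracket {n : ℕ} (X Y : En n → En n) (z : En n) : En n :=
  fderiv ℝ Y z (X z) - fderiv ℝ X z (Y z)

/-- `dd^c_J τ₀(X,Y)(z)` for a (1,1)-tensor field `J` and real vector fields `X`, `Y`. -/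
def ddcJ {n : ℕ} (J : En n → (En n →L[ℝ] En n)) (X Y : En n → En n) (z : En n) : ℝ :=
  - fderiv ℝ (fun u => dTau u (J u (Y u))) z (X z)
  + fderiv ℝ (fun u => dTau u (J u (X u))) z (Y z)
  + dTau z (J z (lieBracket X Y z))

/-- The standard complex structure: multiplication by `i` at each point. -/
def Jstd (n : ℕ) : En n →L[ℝ] En n :=
  (Complex.I • ContinuousLinearMap.id ℂ (En n)).restrictScalars ℝ

lemma key {n : ℕ} (J : En n → (En n →L[ℝ] En n))
    (hJZ : ∀ z : En n, z ≠ 0 → ∀ c : ℂ, J z (c • z) = (Complex.I * c) • z)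
    (hJH : ∀ z : En n, z ≠ 0 → ∀ v : En n, (inner ℂ z v : ℂ) = 0 → (inner ℂ z (J z v) : ℂ) = 0)
    (u : En n) (hu : u ≠ 0) (v : En n) :
    (inner ℂ u (J u v) : ℂ) = Complex.I * inner ℂ u v := by
  set c : ℂ := (inner ℂ u v : ℂ) / ((‖u‖ : ℂ))^2 with hc
  have hnorm : ((‖u‖ : ℂ))^2 ≠ 0 := by
    simp [hu, norm_eq_zero]
  have hself : (inner ℂ u u : ℂ) = ((‖u‖ : ℂ))^2 := by
    rw [inner_self_eq_norm_sq_to_K]; norm_cast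
  have hcu : (inner ℂ u (c • u) : ℂ) = inner ℂ u v := by
    rw [inner_smul_right, hself, hc]
    field_simp
    exact mul_div_cancel_right₀ _ (by exact_mod_cast (norm_ne_zero_iff.mpr hu))
  have hw : (inner ℂ u (v - c • u) : ℂ) = 0 := by
    rw [inner_sub_right, hcu, sub_self]
  have hv : v = c • u + (v - c • u) := by abel
  calc (inner ℂ u (J u v) : ℂ)
      = inner ℂ u (J u (c • u) + J u (v - c • u)) := by
        conv_lhs => rw [hv, map_add]
    _ = inner ℂ u (J u (c • u)) + inner ℂ u (J u (v - c • u)) := inner_add_right _ _ _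
    _ = inner ℂ u ((Complex.I * c) • u) + 0 := by rw [hJZ u hu c, hJH u hu _ hw]
    _ = (Complex.I * c) * inner ℂ u u + 0 := by rw [inner_smul_right]
    _ = Complex.I * inner ℂ u v := by
        rw [hself, add_zero, hc]
        field_simp
        exact mul_div_cancel_right₀ _ (by exact_mod_cast (norm_ne_zero_iff.mpr hu))

lemma dTau_eq {n : ℕ} (J : En n → (En n →L[ℝ] En n))
    (hJZ : ∀ z : En n, z ≠ 0 → ∀ c : ℂ, J z (c • z) = (Complex.I * c) • z)
    (hJH : ∀ z : En n, z ≠ 0 → ∀ v : En n, (inner ℂ z v : ℂ) = 0 → (inner ℂ z (J z v) : ℂ) = 0)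
    (u : En n) (hu : u ≠ 0) (v : En n) :
    dTau u (J u v) = dTau u (Jstd n v) := by
  have h1 := key J hJZ hJH u hu v
  have h2 : (inner ℂ u (Jstd n v) : ℂ) = Complex.I * inner ℂ u v := by
    have : Jstd n v = Complex.I • v := rfl
    rw [this, inner_smul_right]
  rw [dTau, dTau, h1, h2]

/-- **Lemma 3.2 (Euclidean form).** If a `C¹` tensor field `J` on `ℂⁿ∖{0}` agrees with
multiplication by `i` on `𝒵_z = ℂ·z` and preserves `𝓗_z = z^⊥`, then
`dd^c_J τ₀ = dd^c_{J_st} τ₀` on `ℂⁿ∖{0}`. -/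
theorem statement0 (n : ℕ) (hn : 2 ≤ n)
    (J : En n → (En n →L[ℝ] En n))
    (hJC1 : ContDiffOn ℝ 1 J ({0}ᶜ : Set (En n)))
    (hJZ : ∀ z : En n, z ≠ 0 → ∀ c : ℂ, J z (c • z) = (Complex.I * c) • z)
    (hJH : ∀ z : En n, z ≠ 0 → ∀ v : En n, (inner ℂ z v : ℂ) = 0 → (inner ℂ z (J z v) : ℂ) = 0)
    (X Y : En n → En n)
    (hX : ContDiffOn ℝ 1 X ({0}ᶜ : Set (En n)))
    (hY : ContDiffOn ℝ 1 Y ({0}ᶜ : Set (En n)))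
    (z : En n) (hz : z ≠ 0) :
    ddcJ J X Y z = ddcJ (fun _ => Jstd n) X Y z := by
  have hmem : ({0}ᶜ : Set (En n)) ∈ nhds z :=
    (isOpen_compl_singleton).mem_nhds hz
  have hevY : (fun u => dTau u (J u (Y u))) =ᶠ[nhds z] (fun u => dTau u (Jstd n (Y u))) := by
    filter_upwards [hmem] with u hu
    exact dTau_eq J hJZ hJH u hu (Y u)
  have hevX : (fun u => dTau u (J u (X u))) =ᶠ[nhds z] (fun u => dTau u (Jstd n (X u))) := by
    filter_upwards [hmem] with u hu
    exact dTau_eq J hJZ hJH u hu (X u)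
  unfold ddcJ
  rw [hevY.fderiv_eq, hevX.fderiv_eq, dTau_eq J hJZ hJH z hz]

end
end

section
/- (Proposition 3.5 of the paper, coordinate form: the derivative of a push-forward family of complex-structure tensors equals minus the Lie derivative along the velocity field.) For every t ∈ I and x ∈ Ω', the map s ↦ J_s(x) is differentiable at s = t and d/ds J_s(x)|_{s=t} = D_xX(t,x) ∘ J_t(x) − J_t(x) ∘ D_xX(t,x) − D_x(J_t)(x)[X(t,x)], where D_x(J_t)(x)[X(t,x)] denotes the Fréchet derivative of the map x ↦ J_t(x) (with values in E →L[ℝ] E) applied to the vector X(t,x). -/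
open ContinuousLinearMap Filter

set_option maxHeartbeats 1000000

/-- **Proposition 3.5 (coordinate form).** If `J_t = D_yF(t,G(t,·)) ∘ J ∘ D_xG(t,·)` is the
push-forward family of complex-structure tensors of a `C¹` tensor field `J` along a `C²` family
of diffeomorphisms `F(t,·) : Ω → Ω'` with inverses `G(t,·)`, and `X(t,x) = d/ds F(s,G(t,x))|_{s=t}`
is the velocity field, then for `t ∈ I` and `x ∈ Ω'` the map `s ↦ J_s(x)` is differentiable at
`s = t` with derivative `D_xX(t,·)|_x ∘ J_t(x) − J_t(x) ∘ D_xX(t,·)|_x − D_x(J_t)(x)[X(t,x)]`,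
i.e. minus the Lie derivative of `J_t` along `X_t`. -/
theorem statement1 {E : Type*} [NormedAddCommGroup E] [NormedSpace ℝ E] [CompleteSpace E]
    (a b : ℝ) (Ω Ω' : Set E) (hΩ : IsOpen Ω) (hΩ' : IsOpen Ω')
    (F G : ℝ → E → E)
    (hF : ContDiffOn ℝ 2 (fun p : ℝ × E => F p.1 p.2) (Set.Ioo a b ×ˢ Ω))
    (hG : ContDiffOn ℝ 2 (fun p : ℝ × E => G p.1 p.2) (Set.Ioo a b ×ˢ Ω'))
    (hFmem : ∀ t ∈ Set.Ioo a b, ∀ y ∈ Ω, F t y ∈ Ω')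
    (hGmem : ∀ t ∈ Set.Ioo a b, ∀ x ∈ Ω', G t x ∈ Ω)
    (hGF : ∀ t ∈ Set.Ioo a b, ∀ y ∈ Ω, G t (F t y) = y)
    (hFG : ∀ t ∈ Set.Ioo a b, ∀ x ∈ Ω', F t (G t x) = x)
    (J : E → (E →L[ℝ] E)) (hJ : ContDiffOn ℝ 1 J Ω)
    (Jfam : ℝ → E → (E →L[ℝ] E))
    (hJfam : ∀ t, ∀ x,
      Jfam t x = (fderiv ℝ (F t) (G t x)).comp ((J (G t x)).comp (fderiv ℝ (G t) x)))
    (X : ℝ → E → E)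
    (hX : ∀ t, ∀ x, X t x = deriv (fun s => F s (G t x)) t)
    (t : ℝ) (ht : t ∈ Set.Ioo a b) (x : E) (hx : x ∈ Ω') :
    HasDerivAt (fun s => Jfam s x)
      ((fderiv ℝ (X t) x).comp (Jfam t x) - (Jfam t x).comp (fderiv ℝ (X t) x)
        - fderiv ℝ (fun x' => Jfam t x') x (X t x)) t := by
  classical
  set f : ℝ × E → E := fun p => F p.1 p.2 with hfdef
  set g : ℝ × E → E := fun p => G p.1 p.2 with hgdef
  have hso : IsOpen (Set.Ioo a b ×ˢ Ω) := isOpen_Ioo.prod hΩ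
  have hso' : IsOpen (Set.Ioo a b ×ˢ Ω') := isOpen_Ioo.prod hΩ'
  set y₀ : E := G t x with hy₀def
  have hy₀Ω : y₀ ∈ Ω := hGmem t ht x hx
  have hp₀ : ((t, y₀) : ℝ × E) ∈ Set.Ioo a b ×ˢ Ω := ⟨ht, hy₀Ω⟩
  have hq₀ : ((t, x) : ℝ × E) ∈ Set.Ioo a b ×ˢ Ω' := ⟨ht, hx⟩
  -- basic differentiability facts
  have hfC : ∀ p ∈ Set.Ioo a b ×ˢ Ω, ContDiffAt ℝ 2 f p :=
    fun p hp => hF.contDiffAt (hso.mem_nhds hp)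
  have hgC : ∀ p ∈ Set.Ioo a b ×ˢ Ω', ContDiffAt ℝ 2 g p :=
    fun p hp => hG.contDiffAt (hso'.mem_nhds hp)
  have hfd : ∀ p ∈ Set.Ioo a b ×ˢ Ω, HasFDerivAt f (fderiv ℝ f p) p :=
    fun p hp => ((hfC p hp).differentiableAt two_ne_zero).hasFDerivAt
  have hgd : ∀ p ∈ Set.Ioo a b ×ˢ Ω', HasFDerivAt g (fderiv ℝ g p) p :=
    fun p hp => ((hgC p hp).differentiableAt two_ne_zero).hasFDerivAt
  have hDfd : HasFDerivAt (fderiv ℝ f) (fderiv ℝ (fderiv ℝ f) (t, y₀)) (t, y₀) :=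
    ((((hfC _ hp₀).fderiv_right (m := 1) (by norm_num)).differentiableAt one_ne_zero)).hasFDerivAt
  have hDgd : HasFDerivAt (fderiv ℝ g) (fderiv ℝ (fderiv ℝ g) (t, x)) (t, x) :=
    ((((hgC _ hq₀).fderiv_right (m := 1) (by norm_num)).differentiableAt one_ne_zero)).hasFDerivAt
  -- named operators
  set DF0 : ℝ × E →L[ℝ] E := fderiv ℝ f (t, y₀) with hDF0
  set DG0 : ℝ × E →L[ℝ] E := fderiv ℝ g (t, x) with hDG0
  set DDf : ℝ × E →L[ℝ] (ℝ × E →L[ℝ] E) := fderiv ℝ (fderiv ℝ f) (t, y₀) with hDDf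
  set DDg : ℝ × E →L[ℝ] (ℝ × E →L[ℝ] E) := fderiv ℝ (fderiv ℝ g) (t, x) with hDDg
  set Jy : E →L[ℝ] E := J y₀ with hJy
  have hJd : HasFDerivAt J (fderiv ℝ J y₀) y₀ :=
    (((hJ.contDiffAt (hΩ.mem_nhds hy₀Ω)).differentiableAt one_ne_zero)).hasFDerivAt
  set DJ0 : E →L[ℝ] (E →L[ℝ] E) := fderiv ℝ J y₀ with hDJ0
  -- partial space derivatives of F s and G s
  have hFt : ∀ s ∈ Set.Ioo a b, ∀ y ∈ Ω,
      HasFDerivAt (F s) ((fderiv ℝ f (s, y)).comp (inr ℝ ℝ E)) y := fun s hs y hy =>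
    (hfd (s, y) ⟨hs, hy⟩).comp y (hasFDerivAt_prodMk_right s y)
  have hGt : ∀ s ∈ Set.Ioo a b, ∀ x' ∈ Ω',
      HasFDerivAt (G s) ((fderiv ℝ g (s, x')).comp (inr ℝ ℝ E)) x' := fun s hs x' hx' =>
    (hgd (s, x') ⟨hs, hx'⟩).comp x' (hasFDerivAt_prodMk_right s x')
  set Af : E →L[ℝ] E := DF0.comp (inr ℝ ℝ E) with hAf
  set Bg : E →L[ℝ] E := DG0.comp (inr ℝ ℝ E) with hBg
  set Xv : E := DF0 (1, 0) with hXv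
  set v : E := DG0 (1, 0) with hv
  -- Af ∘ Bg = id, Bg ∘ Af = id
  have hABid : Af.comp Bg = ContinuousLinearMap.id ℝ E := by
    have h1 : HasFDerivAt (fun x' => F t (G t x')) (Af.comp Bg) x :=
      (hFt t ht y₀ hy₀Ω).comp x (hGt t ht x hx)
    have h2 : (fun x' => F t (G t x')) =ᶠ[nhds x] fun x' => x' := by
      filter_upwards [hΩ'.mem_nhds hx] with z hz using hFG t ht z hz
    exact ((h1.congr_of_eventuallyEq h2.symm).unique (hasFDerivAt_id x))
  have hBAid : Bg.comp Af = ContinuousLinearMap.id ℝ E := by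
    have hFty : F t y₀ = x := hFG t ht x hx
    have h1 : HasFDerivAt (fun y => G t (F t y)) (Bg.comp Af) y₀ := by
      refine HasFDerivAt.comp y₀ ?_ (hFt t ht y₀ hy₀Ω)
      rw [hFty]; exact hGt t ht x hx
    have h2 : (fun y => G t (F t y)) =ᶠ[nhds y₀] fun y => y := by
      filter_upwards [hΩ.mem_nhds hy₀Ω] with z hz using hGF t ht z hz
    exact ((h1.congr_of_eventuallyEq h2.symm).unique (hasFDerivAt_id y₀))
  have haB : ∀ z : E, DF0 (0, DG0 (0, z)) = z := by
    intro z
    have := ContinuousLinearMap.ext_iff.1 hABid z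
    simpa [hAf, hBg] using this
  have hbA : ∀ z : E, DG0 (0, DF0 (0, z)) = z := by
    intro z
    have := ContinuousLinearMap.ext_iff.1 hBAid z
    simpa [hAf, hBg] using this
  -- second order identity machinery
  set m : ℝ × E → ℝ × E := fun p => (p.1, f p) with hmdef
  set inlfst : (ℝ × E) →L[ℝ] (ℝ × E) := (inl ℝ ℝ E).comp (fst ℝ ℝ E) with hinlfst
  set ρ : ℝ × E → ((ℝ × E) →L[ℝ] E) := fun p =>
    (fderiv ℝ g (m p)).comp inlfst + ((fderiv ℝ g (m p)).comp (inr ℝ ℝ E)).comp (fderiv ℝ f p)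
    with hρdef
  have hρval : ∀ p ∈ Set.Ioo a b ×ˢ Ω, ρ p = snd ℝ ℝ E := by
    intro p hp
    have hm : HasFDerivAt m ((fst ℝ ℝ E).prod (fderiv ℝ f p)) p :=
      HasFDerivAt.prodMk hasFDerivAt_fst (hfd p hp)
    have hmmem : m p ∈ Set.Ioo a b ×ˢ Ω' := ⟨hp.1, hFmem p.1 hp.1 p.2 hp.2⟩
    have h1 : HasFDerivAt (fun q => g (m q))
        ((fderiv ℝ g (m p)).comp ((fst ℝ ℝ E).prod (fderiv ℝ f p))) p :=
      (hgd _ hmmem).comp p hm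
    have h2 : (fun q : ℝ × E => g (m q)) =ᶠ[nhds p] (fun q => q.2) := by
      filter_upwards [hso.mem_nhds hp] with q hq using hGF q.1 hq.1 q.2 hq.2
    have h3 : (fderiv ℝ g (m p)).comp ((fst ℝ ℝ E).prod (fderiv ℝ f p)) = snd ℝ ℝ E :=
      (h1.congr_of_eventuallyEq h2.symm).unique hasFDerivAt_snd
    rw [← h3, hρdef]
    refine ContinuousLinearMap.ext fun q => ?_
    simp only [ContinuousLinearMap.add_apply, ContinuousLinearMap.comp_apply,
      ContinuousLinearMap.inl_apply, ContinuousLinearMap.inr_apply,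
      ContinuousLinearMap.coe_fst', ContinuousLinearMap.prod_apply, hinlfst]
    rw [← map_add, Prod.mk_add_mk, add_zero, zero_add]
  have hFty : F t y₀ = x := hFG t ht x hx
  have hmp : m (t, y₀) = (t, x) := Prod.ext rfl hFty
  have hm₀ : HasFDerivAt m ((fst ℝ ℝ E).prod DF0) (t, y₀) := HasFDerivAt.prodMk hasFDerivAt_fst (hfd _ hp₀)
  have hc : HasFDerivAt (fun p => fderiv ℝ g (m p)) (DDg.comp ((fst ℝ ℝ E).prod DF0)) (t, y₀) := by
    refine HasFDerivAt.comp (t, y₀) ?_ hm₀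
    rw [hmp]; exact hDgd
  have hρd := (hc.clm_comp (hasFDerivAt_const inlfst (t, y₀))).add
    ((hc.clm_comp (hasFDerivAt_const (inr ℝ ℝ E) (t, y₀))).clm_comp hDfd)
  have heρ : ρ =ᶠ[nhds ((t : ℝ), y₀)] fun _ => snd ℝ ℝ E := by
    filter_upwards [hso.mem_nhds hp₀] with p hp using hρval p hp
  have h0 := (hρd.congr_of_eventuallyEq heρ.symm).unique (hasFDerivAt_const _ _)
  have key2 : ∀ q r : ℝ × E, DDg (q.1, DF0 q) (r.1, 0) + DDg (q.1, DF0 q) (0, DF0 r)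
      + DG0 (0, DDf q r) = 0 := by
    intro q r
    have e := ContinuousLinearMap.ext_iff.1 (ContinuousLinearMap.ext_iff.1 h0 q) r
    simp only [ContinuousLinearMap.add_apply, ContinuousLinearMap.comp_apply,
      ContinuousLinearMap.flip_apply, ContinuousLinearMap.compL_apply,
      ContinuousLinearMap.zero_apply, ContinuousLinearMap.coe_fst',
      ContinuousLinearMap.prod_apply, ContinuousLinearMap.inl_apply,
      ContinuousLinearMap.inr_apply, ContinuousLinearMap.comp_zero,
      ContinuousLinearMap.zero_comp, zero_add, add_zero, hmp, hinlfst] at e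
    rw [← hDG0, ← hDF0] at e
    convert e using 1
    abel
  -- symmetry of second derivative of f
  have hsymm : ∀ q r : ℝ × E, DDf q r = DDf r q :=
    fun q r => ((hfC _ hp₀).isSymmSndFDerivAt (by simp)) q r
  -- first-order identity : v + DG0 (0, Xv) = 0
  have hvx : v + DG0 (0, Xv) = 0 := by
    have e := ContinuousLinearMap.ext_iff.1 (hρval (t, y₀) hp₀) ((1 : ℝ), (0 : E))
    simp only [hρdef, hmp, hinlfst, ContinuousLinearMap.add_apply,
      ContinuousLinearMap.comp_apply, ContinuousLinearMap.inl_apply,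
      ContinuousLinearMap.inr_apply, ContinuousLinearMap.coe_fst',
      ContinuousLinearMap.coe_snd'] at e
    rw [← hDG0, ← hDF0] at e
    exact e
  -- curve s ↦ G s x and its consequences
  have hγ : HasDerivAt (fun s => G s x) v t :=
    (hgd (t, x) hq₀).comp_hasDerivAt (l := g) t (HasDerivAt.prodMk (hasDerivAt_id' t) (hasDerivAt_const t x))
  have hsg : HasDerivAt (fun s => ((s : ℝ), G s x)) ((1 : ℝ), v) t := HasDerivAt.prodMk (hasDerivAt_id t) hγ
  have hDfs : HasDerivAt (fun s => fderiv ℝ f (s, G s x)) (DDf (1, v)) t :=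
    hDfd.comp_hasDerivAt t hsg
  have hA : HasDerivAt (fun s => (fderiv ℝ f (s, G s x)).comp (inr ℝ ℝ E))
      ((DDf ((1 : ℝ), v)).comp (inr ℝ ℝ E)) t := by
    simpa using hDfs.clm_comp (hasDerivAt_const t (inr ℝ ℝ E))
  have hK : HasDerivAt (fun s => J (G s x)) (DJ0 v) t := hJd.comp_hasDerivAt t hγ
  have hB : HasDerivAt (fun s => (fderiv ℝ g (s, x)).comp (inr ℝ ℝ E))
      ((DDg ((1 : ℝ), (0 : E))).comp (inr ℝ ℝ E)) t := by
    have hDgs : HasDerivAt (fun s => fderiv ℝ g (s, x)) (DDg (1, 0)) t :=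
      hDgd.comp_hasDerivAt t (HasDerivAt.prodMk (hasDerivAt_id' t) (hasDerivAt_const t x))
    simpa using hDgs.clm_comp (hasDerivAt_const t (inr ℝ ℝ E))
  have hΦ := hA.clm_comp (hK.clm_comp hB)
  have heJ : (fun s => Jfam s x) =ᶠ[nhds t]
      (fun s => ((fderiv ℝ f (s, G s x)).comp (inr ℝ ℝ E)).comp
        ((J (G s x)).comp ((fderiv ℝ g (s, x)).comp (inr ℝ ℝ E)))) := by
    filter_upwards [isOpen_Ioo.mem_nhds ht] with s hs
    rw [hJfam s x, (hFt s hs (G s x) (hGmem s hs x hx)).fderiv, (hGt s hs x hx).fderiv]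
  have hMain := hΦ.congr_of_eventuallyEq heJ
  -- value of Jfam t x
  have hJtx : Jfam t x = Af.comp (Jy.comp Bg) := by
    rw [hJfam t x, ← hy₀def, (hFt t ht y₀ hy₀Ω).fderiv, (hGt t ht x hx).fderiv]
  -- fderiv of the velocity field
  have h0prod : HasFDerivAt (fun x' : E => ((t : ℝ), G t x')) ((0 : E →L[ℝ] ℝ).prod Bg) x :=
    HasFDerivAt.prodMk (hasFDerivAt_const t x) (hGt t ht x hx)
  have hc2 : HasFDerivAt (fun x' => fderiv ℝ f (t, G t x'))
      (DDf.comp ((0 : E →L[ℝ] ℝ).prod Bg)) x := hDfd.comp x h0prod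
  have hXev : X t =ᶠ[nhds x] (fun x' => fderiv ℝ f (t, G t x') (1, 0)) := by
    filter_upwards [hΩ'.mem_nhds hx] with x' hx'
    rw [hX t x']
    exact ((hfd (t, G t x') ⟨ht, hGmem t ht x' hx'⟩).comp_hasDerivAt t
      (HasDerivAt.prodMk (hasDerivAt_id' t) (hasDerivAt_const t (G t x')))).deriv
  have hXx : X t x = Xv := hXev.eq_of_nhds
  have hXfd : fderiv ℝ (X t) x = (DDf.comp ((0 : E →L[ℝ] ℝ).prod Bg)).flip (1, 0) := by
    have h := ((hc2.clm_apply (hasFDerivAt_const ((1 : ℝ), (0 : E)) x)).congr_of_eventuallyEq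
      hXev).fderiv
    simpa using h
  -- fderiv of x' ↦ Jfam t x'
  have hK2 : HasFDerivAt (fun x' => J (G t x')) (DJ0.comp Bg) x := hJd.comp x (hGt t ht x hx)
  have hA2 := hc2.clm_comp (hasFDerivAt_const (inr ℝ ℝ E) x)
  have hB2 := (hDgd.comp x (hasFDerivAt_prodMk_right t x)).clm_comp
    (hasFDerivAt_const (inr ℝ ℝ E) x)
  have hΨ := hA2.clm_comp (hK2.clm_comp hB2)
  have hJev : (fun x' => Jfam t x') =ᶠ[nhds x]
      (fun x' => ((fderiv ℝ f (t, G t x')).comp (inr ℝ ℝ E)).comp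
        ((J (G t x')).comp ((fderiv ℝ g (t, x')).comp (inr ℝ ℝ E)))) := by
    filter_upwards [hΩ'.mem_nhds hx] with x' hx'
    rw [hJfam t x', (hFt t ht (G t x') (hGmem t ht x' hx')).fderiv, (hGt t ht x' hx').fderiv]
  have hJfd := (hΨ.congr_of_eventuallyEq hJev).fderiv
  -- put everything together
  refine hMain.congr_deriv ?_
  symm
  rw [hXx, hXfd, hJfd, hJtx]
  -- helper identities
  have hneg : v = -DG0 (0, Xv) := eq_neg_of_add_eq_zero_left hvx
  have hF1v : DF0 ((1 : ℝ), v) = 0 := by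
    have h1 : ((1 : ℝ), v) = ((1 : ℝ), (0 : E)) + ((0 : ℝ), v) := by simp
    have h3 : ((0 : ℝ), -DG0 (0, Xv)) = -(((0 : ℝ), DG0 (0, Xv)) : ℝ × E) := by simp
    rw [h1, map_add, hneg, h3, map_neg, haB]
    simp [← hXv]
  have hDDg10 : ∀ z : E, DDg ((1 : ℝ), (0 : E)) ((0 : ℝ), z)
      = -DG0 (0, DDf (1, v) (0, DG0 (0, z))) := by
    intro z
    have e := key2 (1, v) ((0 : ℝ), DG0 (0, z))
    simp only [hF1v, haB, Prod.mk_zero_zero, map_zero, zero_add, add_zero] at e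
    exact eq_neg_of_add_eq_zero_left e
  have hDDg0X : ∀ z : E, DDg ((0 : ℝ), Xv) ((0 : ℝ), z)
      = -DG0 (0, DDf (0, DG0 (0, Xv)) (0, DG0 (0, z))) := by
    intro z
    have e := key2 ((0 : ℝ), DG0 (0, Xv)) ((0 : ℝ), DG0 (0, z))
    simp only [haB, Prod.mk_zero_zero, map_zero, zero_add, add_zero] at e
    exact eq_neg_of_add_eq_zero_left e
  have hsym10 : ∀ z : E, DDf ((0 : ℝ), z) ((1 : ℝ), (0 : E)) = DDf (1, 0) (0, z) :=
    fun z => hsymm _ _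
  have hps : ∀ z : E, ((1 : ℝ), -z) = (((1 : ℝ), (0 : E)) : ℝ × E) - ((0 : ℝ), z) := by
    intro z; simp [Prod.mk_sub_mk]
  have hadd : ∀ (T : ℝ × E →L[ℝ] E) (a c : E), T (0, a + c) = T (0, a) + T (0, c) := by
    intro T a c
    have : ((0 : ℝ), a + c) = (((0 : ℝ), a) : ℝ × E) + ((0 : ℝ), c) := by simp
    rw [this, map_add]
  have hnegp : ∀ (T : ℝ × E →L[ℝ] E) (a : E), T (0, -a) = -T (0, a) := by
    intro T a
    have : ((0 : ℝ), -a) = -(((0 : ℝ), a) : ℝ × E) := by simp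
    rw [this, map_neg]
  have hsub : ∀ (T : ℝ × E →L[ℝ] E) (a c : E), T (0, a - c) = T (0, a) - T (0, c) := by
    intro T a c
    have : ((0 : ℝ), a - c) = (((0 : ℝ), a) : ℝ × E) - ((0 : ℝ), c) := by simp
    rw [this, map_sub]
  refine ContinuousLinearMap.ext fun h => ?_
  simp only [← hy₀def, ← hDF0, ← hDG0, ← hJy, hAf, hBg, ContinuousLinearMap.sub_apply,
    ContinuousLinearMap.add_apply, ContinuousLinearMap.comp_apply,
    ContinuousLinearMap.flip_apply, ContinuousLinearMap.compL_apply,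
    ContinuousLinearMap.zero_apply, ContinuousLinearMap.inr_apply,
    ContinuousLinearMap.prod_apply, Function.comp_apply, ContinuousLinearMap.comp_zero,
    ContinuousLinearMap.zero_comp, zero_add, add_zero, map_zero, ContinuousLinearMap.coe_zero,
    Pi.zero_apply, hbA, haB, hsym10, hDDg10, hDDg0X, hneg, hps]
  simp only [map_sub, map_add, map_neg, ContinuousLinearMap.sub_apply,
    ContinuousLinearMap.add_apply, ContinuousLinearMap.neg_apply, hadd, hnegp, hsub]
  abel
end

section
/- (Boundary-value lemma from the proof of Lemma 4.1.) Let a : ℂ → ℂ be holomorphic on Δ∖{0} and continuous on Δ̄∖{0}. Assume that the function ζ ↦ ζ·a(ζ) has a finite limit as ζ → 0, and that Re(a(ζ)) = 0 for every ζ with |ζ| = 1. Then there exist λ ∈ ℂ and κ ∈ ℝ such that a(ζ) = λ/ζ + i·κ − λ̄·ζ for all ζ ∈ Δ̄∖{0}. -/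
open Metric Set Filter Complex Function Topology

/-- **Boundary-value lemma (from the proof of Lemma 4.1).** If `a` is holomorphic on the
punctured unit disk, continuous on the punctured closed disk, `ζ·a(ζ)` has a finite limit as
`ζ → 0`, and `Re a = 0` on the unit circle, then `a(ζ) = λ/ζ + i·κ − λ̄·ζ` for some `λ ∈ ℂ`
and `κ ∈ ℝ`. -/
theorem statement2 (a : ℂ → ℂ)
    (hhol : DifferentiableOn ℂ a (Metric.ball (0 : ℂ) 1 \ {0}))
    (hcont : ContinuousOn a (Metric.closedBall (0 : ℂ) 1 \ {0}))
    (hlim : ∃ L : ℂ, Filter.Tendsto (fun ζ => ζ * a ζ)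
      (nhdsWithin 0 (Metric.ball (0 : ℂ) 1 \ {0})) (nhds L))
    (hbdry : ∀ ζ : ℂ, ‖ζ‖ = 1 → (a ζ).re = 0) :
    ∃ (l : ℂ) (κ : ℝ), ∀ ζ ∈ Metric.closedBall (0 : ℂ) 1 \ {0},
      a ζ = l / ζ + Complex.I * (κ : ℂ) - (starRingEnd ℂ) l * ζ := by
  obtain ⟨L, hL0⟩ := hlim
  have hfilt : 𝓝[({0}ᶜ : Set ℂ)] (0:ℂ) = 𝓝[Metric.ball (0:ℂ) 1 \ {0}] 0 := by
    rw [Set.diff_eq, Set.inter_comm]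
    exact nhdsWithin_restrict' _ (Metric.ball_mem_nhds 0 one_pos)
  set q : ℂ → ℂ := fun ζ => ζ * a ζ with hq
  have hL : Filter.Tendsto q (𝓝[≠] (0:ℂ)) (𝓝 L) := by
    rw [show (𝓝[≠] (0:ℂ)) = 𝓝[Metric.ball (0:ℂ) 1 \ {0}] 0 from hfilt]
    exact hL0
  have hql : limUnder (𝓝[≠] (0:ℂ)) q = L := hL.limUnder_eq
  have hbdd : Filter.IsBoundedUnder (· ≤ ·) (𝓝[≠] (0:ℂ)) (norm ∘ q) := by
    exact hL.norm.isBoundedUnder_le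
  have ho : (fun z => q z - q 0) =o[𝓝[≠] (0:ℂ)] fun z => (z - 0)⁻¹ := by
    simpa [hq] using hbdd.isLittleO_sub_self_inv
  have hdq : DifferentiableOn ℂ q (Metric.ball (0:ℂ) 1 \ {0}) :=
    differentiableOn_id.mul hhol
  set g := Function.update q 0 L with hg
  have hgd : DifferentiableOn ℂ g (Metric.ball (0:ℂ) 1) := by
    have := Complex.differentiableOn_update_limUnder_of_isLittleO
      (Metric.ball_mem_nhds (0:ℂ) one_pos) hdq ho
    rwa [hql] at this
  set b : ℂ → ℂ := dslope g 0 with hbdef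
  have hbd : DifferentiableOn ℂ b (Metric.ball (0:ℂ) 1) :=
    (Complex.differentiableOn_dslope (Metric.ball_mem_nhds (0:ℂ) one_pos)).2 hgd
  have hbval : ∀ ζ : ℂ, ζ ≠ 0 → b ζ = a ζ - L / ζ := by
    intro ζ hζ
    rw [hbdef, dslope_of_ne _ hζ, slope_def_field, hg, Function.update_of_ne hζ,
      Function.update_self, hq]
    field_simp
    ring
  set F : ℂ → ℂ := fun ζ => if ζ = 0 then b 0 else a ζ - L / ζ + (starRingEnd ℂ) L * ζ with hF
  have hFval : ∀ ζ : ℂ, ζ ≠ 0 → F ζ = a ζ - L / ζ + (starRingEnd ℂ) L * ζ := by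
    intro ζ hζ; simp only [hF, if_neg hζ]
  have hFball : Set.EqOn F (fun ζ => b ζ + (starRingEnd ℂ) L * ζ) (Metric.ball (0:ℂ) 1) := by
    intro ζ _
    by_cases h : ζ = 0
    · subst h; simp [hF]
    · simp only [hFval ζ h, hbval ζ h]
  have hFd : DifferentiableOn ℂ F (Metric.ball (0:ℂ) 1) :=
    (hbd.add (((differentiable_const _).mul differentiable_id).differentiableOn)).congr hFball
  have hF0 : ContinuousAt F 0 :=
    (hFd.differentiableAt (Metric.ball_mem_nhds _ one_pos)).continuousAt
  have hφ : ContinuousOn (fun ζ => a ζ - L / ζ + (starRingEnd ℂ) L * ζ)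
      (Metric.closedBall (0:ℂ) 1 \ {0}) := by
    refine (hcont.sub (continuousOn_const.div continuousOn_id ?_)).add
      (continuousOn_const.mul continuousOn_id)
    intro ζ hζ; simpa using hζ.2
  have hFcball : ContinuousOn F (Metric.closedBall (0:ℂ) 1) := by
    intro x hx
    by_cases hx0 : x = 0
    · subst hx0; exact hF0.continuousWithinAt
    · have hmem : Metric.closedBall (0:ℂ) 1 \ {0} ∈ 𝓝[Metric.closedBall (0:ℂ) 1] x := by
        rw [Set.diff_eq]
        exact Filter.inter_mem self_mem_nhdsWithin
          (mem_nhdsWithin_of_mem_nhds (isOpen_compl_singleton.mem_nhds (by simpa using hx0)))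
      have h2 : ContinuousWithinAt F (Metric.closedBall (0:ℂ) 1 \ {0}) x := by
        refine (hφ x ⟨hx, by simpa using hx0⟩).congr ?_ (hFval x hx0)
        intro y hy
        exact hFval y (by simpa using hy.2)
      exact h2.mono_of_mem_nhdsWithin hmem
  have hFcl : DiffContOnCl ℂ F (Metric.ball (0:ℂ) 1) :=
    ⟨hFd, by rwa [closure_ball (0:ℂ) one_ne_zero]⟩
  have hfr : ∀ z ∈ frontier (Metric.ball (0:ℂ) 1), (F z).re = 0 := by
    intro z hz
    rw [frontier_ball (0:ℂ) one_ne_zero] at hz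
    have hz1 : ‖z‖ = 1 := by
      simpa using mem_sphere_zero_iff_norm.mp hz
    have hz0 : z ≠ 0 := by
      intro h; rw [h] at hz1; simp at hz1
    have hinv : z⁻¹ = (starRingEnd ℂ) z := by
      rw [Complex.inv_def, Complex.normSq_eq_norm_sq, hz1]
      simp
    rw [hFval z hz0, div_eq_mul_inv, hinv]
    have h1 := hbdry z hz1
    simp [Complex.sub_re, Complex.add_re, Complex.mul_re, h1, Complex.conj_re, Complex.conj_im]
  have hre0 : ∀ z ∈ Metric.closedBall (0:ℂ) 1, (F z).re = 0 := by
    intro z hz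
    have hcl : z ∈ closure (Metric.ball (0:ℂ) 1) := by
      rwa [closure_ball (0:ℂ) one_ne_zero]
    have h1 : ‖Complex.exp (F z)‖ ≤ 1 := by
      refine Complex.norm_le_of_forall_mem_frontier_norm_le Metric.isBounded_ball
        ⟨hFd.cexp, hFcl.2.cexp⟩ (fun w hw => ?_) hcl
      rw [Complex.norm_exp, hfr w hw, Real.exp_zero]
    have h2 : ‖Complex.exp (-F z)‖ ≤ 1 := by
      refine Complex.norm_le_of_forall_mem_frontier_norm_le Metric.isBounded_ball
        ⟨hFd.neg.cexp, hFcl.2.neg.cexp⟩ (fun w hw => ?_) hcl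
      rw [Complex.norm_exp]
      simp [hfr w hw]
    rw [Complex.norm_exp, Real.exp_le_one_iff] at h1 h2
    simp only [Complex.neg_re, neg_nonpos] at h2
    linarith
  have hE1 : ∀ z ∈ Metric.closedBall (0:ℂ) 1, ‖Complex.exp (F z)‖ = 1 := by
    intro z hz
    rw [Complex.norm_exp, hre0 z hz, Real.exp_zero]
  have hmax : IsMaxOn (norm ∘ fun z => Complex.exp (F z)) (Metric.ball (0:ℂ) 1) 0 := by
    intro z hz
    simp only [Set.mem_setOf_eq, Function.comp_apply]
    rw [hE1 z (Metric.ball_subset_closedBall hz),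
      hE1 0 (Metric.mem_closedBall_self zero_le_one)]
  have hEcl : DiffContOnCl ℂ (fun z => Complex.exp (F z)) (Metric.ball (0:ℂ) 1) :=
    ⟨hFd.cexp, hFcl.2.cexp⟩
  have hEconst := Complex.eqOn_closedBall_of_isMaxOn_norm hEcl hmax
  have hsm : (ContinuousLinearMap.toSpanSingleton ℂ (0:ℂ)) = 0 := by ext; simp
  have hderiv : ∀ x ∈ Metric.ball (0:ℂ) 1, fderivWithin ℂ F (Metric.ball (0:ℂ) 1) x = 0 := by
    intro x hx
    have hxd : DifferentiableAt ℂ F x := hFd.differentiableAt (isOpen_ball.mem_nhds hx)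
    have h1 : HasDerivAt (fun z => Complex.exp (F z)) (Complex.exp (F x) * deriv F x) x :=
      hxd.hasDerivAt.cexp
    have heq : (fun z => Complex.exp (F z)) =ᶠ[𝓝 x] fun _ => Complex.exp (F 0) :=
      Filter.eventuallyEq_of_mem (isOpen_ball.mem_nhds hx)
        fun y hy => hEconst (Metric.ball_subset_closedBall hy)
    have h2 : HasDerivAt (fun z => Complex.exp (F z)) 0 x :=
      (hasDerivAt_const x _).congr_of_eventuallyEq heq
    have h3 : deriv F x = 0 :=
      (mul_eq_zero.mp (h1.unique h2)).resolve_left (Complex.exp_ne_zero _)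
    have h4 : HasFDerivAt F (0 : ℂ →L[ℂ] ℂ) x := by
      have h5 := hxd.hasDerivAt
      rw [h3, hasDerivAt_iff_hasFDerivAt, hsm] at h5
      exact h5
    exact h4.hasFDerivWithinAt.fderivWithin (isOpen_ball.uniqueDiffWithinAt hx)
  have hFconstBall : ∀ z ∈ Metric.ball (0:ℂ) 1, F z = F 0 := fun z hz =>
    (convex_ball (0:ℂ) 1).is_const_of_fderivWithin_eq_zero hFd hderiv hz
      (Metric.mem_ball_self one_pos)
  have hFconst : ∀ z ∈ Metric.closedBall (0:ℂ) 1, F z = F 0 := by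
    intro z hz
    have hzc : z ∈ closure (Metric.ball (0:ℂ) 1) := by
      rwa [closure_ball (0:ℂ) one_ne_zero]
    haveI : (𝓝[Metric.ball (0:ℂ) 1] z).NeBot := mem_closure_iff_nhdsWithin_neBot.mp hzc
    have t1 : Filter.Tendsto F (𝓝[Metric.ball (0:ℂ) 1] z) (𝓝 (F z)) :=
      (hFcball z hz).mono Metric.ball_subset_closedBall
    have t2 : Filter.Tendsto F (𝓝[Metric.ball (0:ℂ) 1] z) (𝓝 (F 0)) :=
      tendsto_nhdsWithin_congr (fun x hx => (hFconstBall x hx).symm) tendsto_const_nhds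
    exact tendsto_nhds_unique t1 t2
  refine ⟨L, (F 0).im, fun ζ hζ => ?_⟩
  have hζ0 : ζ ≠ 0 := by simpa using hζ.2
  have h2 : F 0 = Complex.I * ((F 0).im : ℂ) := by
    have h3 : (F 0).re = 0 := hre0 0 (Metric.mem_closedBall_self zero_le_one)
    calc F 0 = ((F 0).re : ℂ) + (F 0).im * Complex.I := (Complex.re_add_im _).symm
      _ = Complex.I * ((F 0).im : ℂ) := by rw [h3]; push_cast; ring
  have h5 : a ζ - L / ζ + (starRingEnd ℂ) L * ζ = Complex.I * (((F 0).im : ℝ) : ℂ) := by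
    rw [← hFval ζ hζ0, hFconst ζ hζ.1]; exact h2
  linear_combination h5
end

section
/- (Formula for J − J_st in terms of a deformation tensor, from Step 1 of the proof of Theorem 2.7.) Assume that id_Q − ψ∘φ : Q → Q is bijective, so that P × Q = Γ_ψ ⊕ Γ_φ. Let J : P × Q → P × Q be the unique ℂ-linear map equal to multiplication by i on Γ_ψ and to multiplication by −i on Γ_φ, and let J_st(p,q) = (i·p, −i·q). Then for all p ∈ P and q ∈ Q: (J − J_st)(p, 0) = 2i·(φ(r), r) where r = (id_Q − ψ∘φ)⁻¹(ψ(p)), and (J − J_st)(0, q) = −2i·(φ(s), ψ(φ(s))) where s = (id_Q − ψ∘φ)⁻¹(q). -/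
/-- **Formula for `J − J_st` in terms of a deformation tensor (Step 1 of the proof of
Theorem 2.7).** Let `φ : Q → P`, `ψ : P → Q` be `ℂ`-linear with `id_Q − ψ∘φ` bijective, and
let `J : P × Q → P × Q` be the `ℂ`-linear map equal to multiplication by `i` on
`Γ_ψ = {(p, ψ(p))}` and by `−i` on `Γ_φ = {(φ(q), q)}`, while `J_st(p,q) = (i·p, −i·q)`. Then
`(J − J_st)(p,0) = 2i·(φ(r), r)` for `r = (id_Q − ψ∘φ)⁻¹(ψ(p))`, and
`(J − J_st)(0,q) = −2i·(φ(s), ψ(φ(s)))` for `s = (id_Q − ψ∘φ)⁻¹(q)`. -/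
theorem statement7 {P Q : Type*} [AddCommGroup P] [Module ℂ P] [AddCommGroup Q] [Module ℂ Q]
    (φ : Q →ₗ[ℂ] P) (ψ : P →ₗ[ℂ] Q)
    (h : Function.Bijective ((LinearMap.id - ψ ∘ₗ φ : Q →ₗ[ℂ] Q) : Q → Q))
    (J : (P × Q) →ₗ[ℂ] (P × Q))
    (hJψ : ∀ p : P, J (p, ψ p) = Complex.I • ((p, ψ p) : P × Q))
    (hJφ : ∀ q : Q, J (φ q, q) = (-Complex.I) • ((φ q, q) : P × Q)) :
    (∀ (p : P) (r : Q), (LinearMap.id - ψ ∘ₗ φ : Q →ₗ[ℂ] Q) r = ψ p →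
        J (p, 0) - ((Complex.I • p, 0) : P × Q)
          = (((2 * Complex.I) • φ r, (2 * Complex.I) • r) : P × Q))
    ∧ ∀ (q s : Q), (LinearMap.id - ψ ∘ₗ φ : Q →ₗ[ℂ] Q) s = q →
        J (0, q) - ((0, (-Complex.I) • q) : P × Q)
          = (((-(2 * Complex.I)) • φ s, (-(2 * Complex.I)) • ψ (φ s)) : P × Q) := by
  constructor
  · intro p r hr
    simp only [LinearMap.sub_apply, LinearMap.id_apply, LinearMap.comp_apply] at hr
    have key : ((p, (0 : Q)) : P × Q) = (p + φ r, ψ (p + φ r)) - (φ r, r) := by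
      rw [Prod.ext_iff]
      constructor
      · simp
      · simp only [Prod.snd_sub, map_add]
        rw [← hr]; abel
    rw [key, map_sub, hJψ, hJφ]
    rw [Prod.ext_iff]
    constructor
    · simp only [Prod.fst_sub, Prod.smul_fst, map_add]
      module
    · simp only [Prod.snd_sub, Prod.smul_snd, map_add, map_sub]
      rw [← hr]; module
  · intro q s hs
    simp only [LinearMap.sub_apply, LinearMap.id_apply, LinearMap.comp_apply] at hs
    have key : (((0 : P), q) : P × Q) = (φ s, s) - (φ s, ψ (φ s)) + ((0:P), ψ (φ s) - s + q) := by
      rw [Prod.ext_iff]; constructor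
      · simp
      · simp only [Prod.snd_add, Prod.snd_sub]; abel
    have hz : ψ (φ s) - s + q = 0 := by rw [← hs]; abel
    rw [hz] at key
    have key2 : (((0 : P), q) : P × Q) = (φ s, s) - (φ s, ψ (φ s)) := by
      simpa using key
    have hψ0 : ((φ s, ψ (φ s)) : P × Q) = (φ s, ψ (φ s)) := rfl
    rw [key2, map_sub, hJφ, hJψ (φ s)]
    rw [Prod.ext_iff]
    constructor
    · simp only [Prod.fst_sub, Prod.smul_fst]
      module
    · simp only [Prod.snd_sub, Prod.smul_snd, map_sub]
      rw [← hs]; module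
end

section
/- (Section 4.1: generalized polar coordinates.) The map η is a bijection from {z ∈ ℂⁿ : zⁿ ≠ 0} onto ℂ^{n−1} × (ℂ∖{0}), with inverse η⁻¹(w,ζ) = (ζ/√(N(w)))·(w¹, …, w^{n−1}, 1); moreover ‖η⁻¹(w,ζ)‖ = |ζ| for all (w,ζ) ∈ ℂ^{n−1} × (ℂ∖{0}), and both η and η⁻¹ are of class C^∞ in the real sense on their open domains, so η is a real diffeomorphism onto ℂ^{n−1} × (ℂ∖{0}). -/
noncomputable section

/-- The Euclidean norm `‖z‖ = (Σ_i |zⁱ|²)^{1/2}` on `ℂ^k`. -/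
def cnorm {k : ℕ} (z : Fin k → ℂ) : ℝ := Real.sqrt (∑ i, Complex.normSq (z i))

/-- `N(w) = 1 + Σ_γ |w^γ|²`. -/
def Nfun {m : ℕ} (w : Fin m → ℂ) : ℝ := 1 + ∑ γ, Complex.normSq (w γ)

/-- The generalized polar coordinate map
`η(z) = (z¹/zⁿ, …, z^{n−1}/zⁿ, ‖z‖·zⁿ/|zⁿ|)`, with `n = m + 1`. -/
def eta {m : ℕ} (z : Fin (m + 1) → ℂ) : (Fin m → ℂ) × ℂ :=
  (fun α => z α.castSucc / z (Fin.last m),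
    (cnorm z : ℂ) * z (Fin.last m) / ((‖z (Fin.last m)‖ : ℝ) : ℂ))

/-- The inverse map `η⁻¹(w,ζ) = (ζ/√N(w))·(w¹, …, w^{n−1}, 1)`. -/
def etaInv {m : ℕ} (p : (Fin m → ℂ) × ℂ) : Fin (m + 1) → ℂ :=
  fun i => (p.2 / (Real.sqrt (Nfun p.1) : ℂ))
    * Fin.lastCases (motive := fun _ => ℂ) 1 (fun α => p.1 α) i

namespace Statement8Aux

lemma sum_normSq_nonneg {k : ℕ} (z : Fin k → ℂ) : 0 ≤ ∑ i, Complex.normSq (z i) :=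
  Finset.sum_nonneg fun _ _ => Complex.normSq_nonneg _

lemma sum_normSq_pos {m : ℕ} (z : Fin (m+1) → ℂ) (h : z (Fin.last m) ≠ 0) :
    0 < ∑ i, Complex.normSq (z i) :=
  lt_of_lt_of_le (Complex.normSq_pos.2 h)
    (Finset.single_le_sum (fun i _ => Complex.normSq_nonneg _) (Finset.mem_univ _))

lemma cnorm_pos {m : ℕ} (z : Fin (m+1) → ℂ) (h : z (Fin.last m) ≠ 0) : 0 < cnorm z :=
  Real.sqrt_pos.2 (sum_normSq_pos z h)

lemma Nfun_pos {m : ℕ} (w : Fin m → ℂ) : 0 < Nfun w := by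
  have := sum_normSq_nonneg w; unfold Nfun; linarith

lemma sqrtN_pos {m : ℕ} (w : Fin m → ℂ) : 0 < Real.sqrt (Nfun w) :=
  Real.sqrt_pos.2 (Nfun_pos w)

lemma Nfun_eta {m : ℕ} (z : Fin (m+1) → ℂ) (h : z (Fin.last m) ≠ 0) :
    Nfun (eta z).1 = (∑ i, Complex.normSq (z i)) / Complex.normSq (z (Fin.last m)) := by
  have h0 : Complex.normSq (z (Fin.last m)) ≠ 0 := (Complex.normSq_pos.2 h).ne'
  simp only [Nfun, eta, Complex.normSq_div]
  rw [← Finset.sum_div, Fin.sum_univ_castSucc]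
  field_simp
  ring

lemma sqrt_Nfun_eta {m : ℕ} (z : Fin (m+1) → ℂ) (h : z (Fin.last m) ≠ 0) :
    Real.sqrt (Nfun (eta z).1) = cnorm z / ‖z (Fin.last m)‖ := by
  rw [Nfun_eta z h, Real.sqrt_div (sum_normSq_nonneg z)]
  rw [cnorm, Complex.norm_def]

lemma key_left {m : ℕ} (z : Fin (m+1) → ℂ) (h : z (Fin.last m) ≠ 0) :
    (eta z).2 / (Real.sqrt (Nfun (eta z).1) : ℂ) = z (Fin.last m) := by
  rw [sqrt_Nfun_eta z h]
  have h1 : cnorm z ≠ 0 := (cnorm_pos z h).ne'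
  have h2 : ‖z (Fin.last m)‖ ≠ 0 := norm_ne_zero_iff.2 h
  have h1' : (cnorm z : ℂ) ≠ 0 := Complex.ofReal_ne_zero.2 h1
  have h2' : ((‖z (Fin.last m)‖ : ℝ) : ℂ) ≠ 0 := Complex.ofReal_ne_zero.2 h2
  simp only [eta]
  push_cast
  field_simp

lemma left_inv {m : ℕ} (z : Fin (m+1) → ℂ) (h : z (Fin.last m) ≠ 0) :
    etaInv (eta z) = z := by
  funext i
  induction i using Fin.lastCases with
  | last => simp [etaInv, key_left z h]
  | cast α =>
      have hc := key_left z h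
      simp only [etaInv, Fin.lastCases_castSucc]
      rw [hc]
      simp only [eta]
      field_simp

lemma etaInv_last {m : ℕ} (p : (Fin m → ℂ) × ℂ) :
    etaInv p (Fin.last m) = p.2 / (Real.sqrt (Nfun p.1) : ℂ) := by
  simp [etaInv]

lemma etaInv_last_ne {m : ℕ} (p : (Fin m → ℂ) × ℂ) (h : p.2 ≠ 0) :
    etaInv p (Fin.last m) ≠ 0 := by
  rw [etaInv_last]
  have : (Real.sqrt (Nfun p.1) : ℂ) ≠ 0 :=
    Complex.ofReal_ne_zero.2 (sqrtN_pos p.1).ne'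
  exact div_ne_zero h this

lemma sum_normSq_etaInv {m : ℕ} (p : (Fin m → ℂ) × ℂ) :
    ∑ i, Complex.normSq (etaInv p i) = Complex.normSq p.2 := by
  have hN := Nfun_pos p.1
  rw [Fin.sum_univ_castSucc]
  simp only [etaInv, Fin.lastCases_castSucc, Fin.lastCases_last, Complex.normSq_mul,
    Complex.normSq_div, Complex.normSq_ofReal, Complex.normSq_one, mul_one]
  rw [← Finset.mul_sum]
  have h2 : Real.sqrt (Nfun p.1) * Real.sqrt (Nfun p.1) = Nfun p.1 :=
    Real.mul_self_sqrt hN.le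
  rw [h2]
  have hsum : (1 : ℝ) + ∑ α, Complex.normSq (p.1 α) = Nfun p.1 := rfl
  field_simp
  linear_combination Complex.normSq p.2 * hsum

lemma cnorm_etaInv {m : ℕ} (p : (Fin m → ℂ) × ℂ) : cnorm (etaInv p) = ‖p.2‖ := by
  rw [cnorm, sum_normSq_etaInv, ← Complex.norm_def]

lemma right_inv {m : ℕ} (p : (Fin m → ℂ) × ℂ) (h : p.2 ≠ 0) :
    eta (etaInv p) = p := by
  have hc : etaInv p (Fin.last m) = p.2 / (Real.sqrt (Nfun p.1) : ℂ) := etaInv_last p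
  have hc0 : etaInv p (Fin.last m) ≠ 0 := etaInv_last_ne p h
  have hS : (Real.sqrt (Nfun p.1) : ℂ) ≠ 0 :=
    Complex.ofReal_ne_zero.2 (sqrtN_pos p.1).ne'
  have habs : ‖p.2‖ ≠ 0 := norm_ne_zero_iff.2 h
  have hSr : Real.sqrt (Nfun p.1) ≠ 0 := (sqrtN_pos p.1).ne'
  ext1
  · funext α
    simp only [eta, etaInv, Fin.lastCases_castSucc, Fin.lastCases_last, mul_one]
    rw [mul_div_assoc]
    field_simp
  · simp only [eta, cnorm_etaInv p, hc]
    rw [norm_div, Complex.norm_real, Real.norm_of_nonneg (sqrtN_pos p.1).le]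
    have habs' : ((‖p.2‖ : ℝ) : ℂ) ≠ 0 := Complex.ofReal_ne_zero.2 habs
    push_cast
    field_simp

lemma contDiff_normSq : ContDiff ℝ (⊤:ℕ∞) Complex.normSq := by
  have h := contDiff_norm_sq (𝕜 := ℝ) (E := ℂ) (n := ((⊤:ℕ∞) : WithTop ℕ∞))
  simpa [Complex.sq_norm] using h

lemma contDiff_proj {k : ℕ} (i : Fin k) :
    ContDiff ℝ (⊤:ℕ∞) (fun z : Fin k → ℂ => z i) :=
  (ContinuousLinearMap.proj (R := ℝ) (φ := fun _ : Fin k => ℂ) i).contDiff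

lemma contDiff_projC {k : ℕ} (i : Fin k) :
    ContDiff ℂ (⊤:ℕ∞) (fun z : Fin k → ℂ => z i) :=
  (ContinuousLinearMap.proj (R := ℂ) (φ := fun _ : Fin k => ℂ) i).contDiff

lemma contDiff_sumSq {k : ℕ} :
    ContDiff ℝ (⊤:ℕ∞) (fun z : Fin k → ℂ => ∑ i, Complex.normSq (z i)) :=
  ContDiff.sum fun i _ => contDiff_normSq.comp (contDiff_proj i)

lemma contDiffOn_cnorm {m : ℕ} :
    ContDiffOn ℝ (⊤:ℕ∞) cnorm {z : Fin (m+1) → ℂ | z (Fin.last m) ≠ 0} := fun z hz =>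
  (((Real.contDiffAt_sqrt (sum_normSq_pos z hz).ne').comp z
      contDiff_sumSq.contDiffAt)).contDiffWithinAt

lemma contDiffOn_absLast {m : ℕ} :
    ContDiffOn ℝ (⊤:ℕ∞) (fun z : Fin (m+1) → ℂ => ‖z (Fin.last m)‖)
      {z : Fin (m+1) → ℂ | z (Fin.last m) ≠ 0} := by
  have : (fun z : Fin (m+1) → ℂ => ‖z (Fin.last m)‖)
      = fun z => Real.sqrt (Complex.normSq (z (Fin.last m))) :=
    funext fun z => Complex.norm_def _
  rw [this]
  exact fun z hz =>
    ((Real.contDiffAt_sqrt (Complex.normSq_pos.2 hz).ne').comp z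
      (contDiff_normSq.comp (contDiff_proj _)).contDiffAt).contDiffWithinAt

lemma contDiffOn_eta {m : ℕ} :
    ContDiffOn ℝ (⊤:ℕ∞) eta {z : Fin (m+1) → ℂ | z (Fin.last m) ≠ 0} := by
  apply ContDiffOn.prodMk
  · rw [contDiffOn_pi]
    intro α
    exact (((contDiff_projC α.castSucc).contDiffOn.div
      (contDiff_projC (Fin.last m)).contDiffOn fun z hz => hz).restrict_scalars ℝ)
  · have hg : ContDiffOn ℝ (⊤:ℕ∞)
        (fun z : Fin (m+1) → ℂ => cnorm z / ‖z (Fin.last m)‖)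
        {z : Fin (m+1) → ℂ | z (Fin.last m) ≠ 0} :=
      contDiffOn_cnorm.div contDiffOn_absLast fun z hz => norm_ne_zero_iff.2 hz
    have hF : ContDiffOn ℝ (⊤:ℕ∞)
        (fun z : Fin (m+1) → ℂ =>
          ((cnorm z / ‖z (Fin.last m)‖ : ℝ) : ℂ) * z (Fin.last m))
        {z : Fin (m+1) → ℂ | z (Fin.last m) ≠ 0} :=
      (Complex.ofRealCLM.contDiff.comp_contDiffOn hg).mul
        (contDiff_proj (Fin.last m)).contDiffOn
    refine hF.congr fun z hz => ?_
    push_cast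
    ring

lemma contDiff_etaInv {m : ℕ} : ContDiff ℝ (⊤:ℕ∞) (etaInv (m := m)) := by
  have hN : ContDiff ℝ (⊤:ℕ∞) (fun p : (Fin m → ℂ) × ℂ => Nfun p.1) :=
    contDiff_const.add (ContDiff.sum fun γ _ =>
      contDiff_normSq.comp ((contDiff_proj γ).comp contDiff_fst))
  have hg : ContDiff ℝ (⊤:ℕ∞)
      (fun p : (Fin m → ℂ) × ℂ => (Real.sqrt (Nfun p.1))⁻¹) := by
    rw [contDiff_iff_contDiffAt]
    intro p
    exact ((Real.contDiffAt_sqrt (Nfun_pos p.1).ne').comp p hN.contDiffAt).inv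
      (sqrtN_pos p.1).ne'
  have hc : ContDiff ℝ (⊤:ℕ∞)
      (fun p : (Fin m → ℂ) × ℂ => p.2 * ((Real.sqrt (Nfun p.1))⁻¹ : ℝ)) :=
    contDiff_snd.mul (Complex.ofRealCLM.contDiff.comp hg)
  rw [contDiff_pi]
  intro i
  induction i using Fin.lastCases with
  | last =>
      have : (fun p : (Fin m → ℂ) × ℂ => etaInv p (Fin.last m))
          = fun p : (Fin m → ℂ) × ℂ => p.2 * ((Real.sqrt (Nfun p.1))⁻¹ : ℝ) := by
        funext p
        simp [etaInv, div_eq_mul_inv]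
      rw [this]; exact hc
  | cast α =>
      have : (fun p : (Fin m → ℂ) × ℂ => etaInv p α.castSucc)
          = fun p : (Fin m → ℂ) × ℂ =>
              (p.2 * ((Real.sqrt (Nfun p.1))⁻¹ : ℝ)) * p.1 α := by
        funext p
        simp [etaInv, div_eq_mul_inv]
      rw [this]
      exact hc.mul ((contDiff_proj α).comp contDiff_fst)

end Statement8Aux

/-- **Section 4.1: generalized polar coordinates.** `η` is a bijection from
`{z ∈ ℂⁿ : zⁿ ≠ 0}` onto `ℂ^{n−1} × (ℂ∖{0})` with inverse `η⁻¹` as above; moreover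
`‖η⁻¹(w,ζ)‖ = |ζ|`, and both `η` and `η⁻¹` are `C^∞` in the real sense on their open domains,
so `η` is a real diffeomorphism. Here `n = m + 1 ≥ 2`. -/


theorem statement8 (m : ℕ) (hm : 1 ≤ m) :
    Set.BijOn eta {z : Fin (m + 1) → ℂ | z (Fin.last m) ≠ 0}
      {p : (Fin m → ℂ) × ℂ | p.2 ≠ 0}
    ∧ Set.InvOn etaInv eta {z : Fin (m + 1) → ℂ | z (Fin.last m) ≠ 0}
      {p : (Fin m → ℂ) × ℂ | p.2 ≠ 0}
    ∧ (∀ p : (Fin m → ℂ) × ℂ, p.2 ≠ 0 → cnorm (etaInv p) = ‖p.2‖)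
    ∧ ContDiffOn ℝ (⊤ : ℕ∞) eta {z : Fin (m + 1) → ℂ | z (Fin.last m) ≠ 0}
    ∧ ContDiffOn ℝ (⊤ : ℕ∞) etaInv {p : (Fin m → ℂ) × ℂ | p.2 ≠ 0} := by
  classical
  open Statement8Aux in
  have hmt1 : Set.MapsTo eta {z : Fin (m + 1) → ℂ | z (Fin.last m) ≠ 0}
      {p : (Fin m → ℂ) × ℂ | p.2 ≠ 0} := by
    intro z hz
    have h1 : (cnorm z : ℂ) ≠ 0 :=
      Complex.ofReal_ne_zero.2 (Statement8Aux.cnorm_pos z hz).ne'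
    have h2 : ((‖z (Fin.last m)‖ : ℝ) : ℂ) ≠ 0 :=
      Complex.ofReal_ne_zero.2 (norm_ne_zero_iff.2 hz)
    show (eta z).2 ≠ 0
    simp only [eta]
    exact div_ne_zero (mul_ne_zero h1 hz) h2
  have hmt2 : Set.MapsTo etaInv {p : (Fin m → ℂ) × ℂ | p.2 ≠ 0}
      {z : Fin (m + 1) → ℂ | z (Fin.last m) ≠ 0} := fun p hp =>
    Statement8Aux.etaInv_last_ne p hp
  have hinv : Set.InvOn etaInv eta {z : Fin (m + 1) → ℂ | z (Fin.last m) ≠ 0}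
      {p : (Fin m → ℂ) × ℂ | p.2 ≠ 0} :=
    ⟨fun z hz => Statement8Aux.left_inv z hz, fun p hp => Statement8Aux.right_inv p hp⟩
  exact ⟨hinv.bijOn hmt1 hmt2, hinv,
    fun p _ => Statement8Aux.cnorm_etaInv p,
    Statement8Aux.contDiffOn_eta, Statement8Aux.contDiff_etaInv.contDiffOn⟩

end
end
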